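/- Subterm property for RKNL (via the ghost machine RKNLi): every term belonging to the syntactic category of Terms occurring in any reachable configuration of RKNLi is a subterm of the initial source term; consequently, every term t occurring in a closure (t, e) in any reachable RKNL configuration is a subterm of the source term. -/

import Mathlib

set_option autoImplicit false
set_option maxHeartbeats 1000000

namespace RKNL

/- Pure lambda terms over a type of variables. -/
inductive Tm (V : Type) : Type
  | var : V → Tm V
  | app : Tm V → Tm V → Tm V
  | lam : V → Tm V → Tm V
  deriving DecidableEq

abbrev Ident : Type := ℕ
abbrev Loc : Type := ℕ

/-- Lookup in an association list (first match). -/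
def lookupL {β : Type} : List (ℕ × β) → ℕ → Option β
  | [], _ => none
  | (a, b) :: l, x => if x = a then some b else lookupL l x

/-- Update of an association list. -/
def updL {β : Type} (l : List (ℕ × β)) (x : ℕ) (b : β) : List (ℕ × β) :=
  l.map fun p => if p.1 = x then (x, b) else p

/-- Environments map identifiers to store locations. -/
abbrev Env : Type := List (Ident × Loc)

/-- Closures pair a term with an environment. -/
abbrev Closure : Type := Tm Ident × Env

/-- Values: terms (normal forms), or abstraction closures annotated with a location. -/
inductive Value : Type
  | tm : Tm Ident → Value
  | abs : Ident → Tm Ident → Env → Loc → Value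
  deriving DecidableEq

/-- Storable values (memothunks):
`pend x t e` is the `todo ⊥` placeholder allocated for the abstraction `(λx.t, e)`,
`todo c` an unevaluated argument thunk, `done v` a memoized value. -/
inductive Storable : Type
  | pend : Ident → Tm Ident → Env → Storable
  | todo : Closure → Storable
  | done : Value → Storable
  deriving DecidableEq

/-- Stores map locations to storable values. -/
abbrev Store : Type := List (Loc × Storable)

/-- Stack frames: `arg c` is `(□ c)`, `appL t` is `(t □)`, `lamF x` is `λx.□`,
`cache ℓ` is `ℓ := □`. -/
inductive Frame : Type
  | arg : Closure → Frame
  | appL : Tm Ident → Frame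
  | lamF : Ident → Frame
  | cache : Loc → Frame
  deriving DecidableEq

abbrev Stack : Type := List Frame

/-- Machine configurations: evaluation mode `⟨c, s, σ⟩▸` and continue mode `⟨σ, v, s⟩◂`. -/
inductive Conf : Type
  | eval : Closure → Stack → Store → Conf
  | cont : Store → Value → Stack → Conf

/-- The initial configuration loading a term. -/
def Conf.init (t : Tm Ident) : Conf := .eval (t, []) [] []

def Conf.store : Conf → Store
  | .eval _ _ σ => σ
  | .cont σ _ _ => σ

def Conf.stack : Conf → Stack
  | .eval _ s _ => s
  | .cont _ _ s => s

/- Identifiers occurring in a configuration (used for freshness of generated names). -/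
def tmVars : Tm Ident → List Ident
  | .var x => [x]
  | .app a b => tmVars a ++ tmVars b
  | .lam x t => x :: tmVars t

def envVars (e : Env) : List Ident := e.map Prod.fst

def valVars : Value → List Ident
  | .tm t => tmVars t
  | .abs x t e _ => x :: (tmVars t ++ envVars e)

def storableVars : Storable → List Ident
  | .pend x t e => x :: (tmVars t ++ envVars e)
  | .todo c => tmVars c.1 ++ envVars c.2
  | .done v => valVars v

def frameVars : Frame → List Ident
  | .arg c => tmVars c.1 ++ envVars c.2
  | .appL t => tmVars t
  | .lamF x => [x]
  | .cache _ => []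

def stackVars (s : Stack) : List Ident := s.foldr (fun f acc => frameVars f ++ acc) []

def storeVars (σ : Store) : List Ident := σ.foldr (fun p acc => storableVars p.2 ++ acc) []

def confVars : Conf → List Ident
  | .eval c s σ => tmVars c.1 ++ envVars c.2 ++ stackVars s ++ storeVars σ
  | .cont σ v s => valVars v ++ stackVars s ++ storeVars σ

/-- The top of the stack is not an argument frame. -/
def Stack.noArgTop : Stack → Prop
  | Frame.arg _ :: _ => False
  | _ => True

/-- The top of the stack is not a memoization frame. -/
def Stack.noCacheTop : Stack → Prop
  | Frame.cache _ :: _ => False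
  | _ => True

/-- The eleven transitions of the RKNL abstract machine, indexed by rule number. -/
inductive Step : ℕ → Conf → Conf → Prop
  | r1 {t1 t2 : Tm Ident} {e : Env} {s : Stack} {σ : Store} :
      Step 1 (.eval (.app t1 t2, e) s σ) (.eval (t1, e) (.arg (t2, e) :: s) σ)
  | r2 {x : Ident} {t : Tm Ident} {e : Env} {s : Stack} {σ : Store} {ℓ : Loc}
      (h : lookupL σ ℓ = none) :
      Step 2 (.eval (.lam x t, e) s σ) (.cont ((ℓ, .pend x t e) :: σ) (.abs x t e ℓ) s)
  | r3 {x : Ident} {e e2 : Env} {s : Stack} {σ : Store} {ℓ : Loc} {t : Tm Ident}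
      (he : lookupL e x = some ℓ) (hσ : lookupL σ ℓ = some (.todo (t, e2))) :
      Step 3 (.eval (.var x, e) s σ) (.eval (t, e2) (.cache ℓ :: s) σ)
  | r4done {x : Ident} {e : Env} {s : Stack} {σ : Store} {ℓ : Loc} {v : Value}
      (he : lookupL e x = some ℓ) (hσ : lookupL σ ℓ = some (.done v)) :
      Step 4 (.eval (.var x, e) s σ) (.cont σ v s)
  | r4free {x : Ident} {e : Env} {s : Stack} {σ : Store}
      (he : lookupL e x = none) :
      Step 4 (.eval (.var x, e) s σ) (.cont σ (.tm (.var x)) s)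
  | r5 {σ : Store} {v : Value} {ℓ : Loc} {s : Stack} :
      Step 5 (.cont σ v (.cache ℓ :: s)) (.cont (updL σ ℓ (.done v)) v s)
  | r6 {σ : Store} {x : Ident} {t t2 : Tm Ident} {e e2 : Env} {ℓ ℓ2 : Loc} {s : Stack}
      (h : lookupL σ ℓ2 = none) :
      Step 6 (.cont σ (.abs x t e ℓ) (.arg (t2, e2) :: s))
             (.eval (t, (x, ℓ2) :: e) s ((ℓ2, .todo (t2, e2)) :: σ))
  | r7 {σ : Store} {x x' x0 : Ident} {t t0 : Tm Ident} {e e0 : Env} {ℓ ℓ2 : Loc} {s : Stack}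
      (hσ : lookupL σ ℓ = some (.pend x0 t0 e0))
      (hs1 : Stack.noArgTop s) (hs2 : Stack.noCacheTop s)
      (hℓ2 : lookupL σ ℓ2 = none)
      (hx' : x' ∉ confVars (.cont σ (.abs x t e ℓ) s)) :
      Step 7 (.cont σ (.abs x t e ℓ) s)
             (.eval (t, (x, ℓ2) :: e) (.lamF x' :: .cache ℓ :: s)
                    ((ℓ2, .done (.tm (.var x'))) :: σ))
  | r8 {σ : Store} {x : Ident} {t : Tm Ident} {e : Env} {ℓ : Loc} {s : Stack} {v : Value}
      (hσ : lookupL σ ℓ = some (.done v))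
      (hs1 : Stack.noArgTop s) (hs2 : Stack.noCacheTop s) :
      Step 8 (.cont σ (.abs x t e ℓ) s) (.cont σ v s)
  | r9 {σ : Store} {t t2 : Tm Ident} {e2 : Env} {s : Stack} :
      Step 9 (.cont σ (.tm t) (.arg (t2, e2) :: s)) (.eval (t2, e2) (.appL t :: s) σ)
  | r10 {σ : Store} {t1 t2 : Tm Ident} {s : Stack} :
      Step 10 (.cont σ (.tm t2) (.appL t1 :: s)) (.cont σ (.tm (.app t1 t2)) s)
  | r11 {σ : Store} {t : Tm Ident} {x : Ident} {s : Stack} :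
      Step 11 (.cont σ (.tm t) (.lamF x :: s)) (.cont σ (.tm (.lam x t)) s)

/-- Reachability by machine transitions. -/
inductive Reach (k0 : Conf) : Conf → Prop
  | refl : Reach k0 k0
  | step {k k' : Conf} {r : ℕ} : Reach k0 k → Step r k k' → Reach k0 k'

/- The ghost abstract machine RKNLi: RKNL with the shape invariant made
explicit (separate syntactic categories of normal and neutral terms, separate
stores for argument thunks and for normal forms of abstractions, and
potentially applicative / non-applicative stacks). -/

mutual
  /-- Normal terms: `n ::= λx.n | ⌈a⌉`. -/
  inductive Nm : Type
    | lam : Ident → Nm → Nm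
    | coe : Ne → Nm
  /-- Neutral terms: `a ::= x | a n`. -/
  inductive Ne : Type
    | var : Ident → Ne
    | app : Ne → Nm → Ne
end

/-- RKNLi values: neutral terms, or abstraction closures annotated with a
location in the normal-form store. -/
inductive VI : Type
  | ne : Ne → VI
  | abs : Ident → Tm Ident → Env → Loc → VI

/-- Storable values of the argument store. -/
inductive StorI : Type
  | todo : Closure → StorI
  | done : VI → StorI

/-- The argument store. -/
abbrev StoreI : Type := List (Loc × StorI)

/-- The normal-form store: `none` is `todo ⊥`, `some n` is `done n`. -/
abbrev StoreN : Type := List (Loc × Option Nm)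

mutual
  /-- Potentially applicative stacks:
  `π ::= (ℓ := □) :: π | (□ c) :: π | ⌈□⌉ :: ϱ`. -/
  inductive PiSt : Type
    | cache : Loc → PiSt → PiSt
    | arg : Closure → PiSt → PiSt
    | coe : RhoSt → PiSt
  /-- Non-applicative stacks:
  `ϱ ::= (ℓ' := □) :: ϱ | [] | (λx.□) :: ϱ | ((a □)) :: π`. -/
  inductive RhoSt : Type
    | cacheN : Loc → RhoSt → RhoSt
    | nil : RhoSt
    | lamF : Ident → RhoSt → RhoSt
    | appL : Ne → PiSt → RhoSt
end

/-- RKNLi configurations. -/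
inductive ConfI : Type
  | eval : Closure → PiSt → StoreI → StoreN → ConfI
  | cont : StoreI → StoreN → VI → PiSt → ConfI
  | contN : StoreI → StoreN → Nm → RhoSt → ConfI

/-- The initial RKNLi configuration loading a term. -/
def ConfI.init (t : Tm Ident) : ConfI := .eval (t, []) (.coe .nil) [] []

/-- The transitions of the ghost machine RKNLi
(rules (1)–(11) together with (5') and (9a)). -/
inductive StepI : ConfI → ConfI → Prop
  | r1 {t1 t2 : Tm Ident} {e : Env} {π : PiSt} {σ : StoreI} {σ' : StoreN} :
      StepI (.eval (.app t1 t2, e) π σ σ') (.eval (t1, e) (.arg (t2, e) π) σ σ')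
  | r2 {x : Ident} {t : Tm Ident} {e : Env} {π : PiSt} {σ : StoreI} {σ' : StoreN}
      {ℓ' : Loc} (h : lookupL σ' ℓ' = none) :
      StepI (.eval (.lam x t, e) π σ σ')
            (.cont σ ((ℓ', none) :: σ') (.abs x t e ℓ') π)
  | r3 {x : Ident} {e e2 : Env} {π : PiSt} {σ : StoreI} {σ' : StoreN} {ℓ : Loc}
      {t : Tm Ident} (he : lookupL e x = some ℓ)
      (hσ : lookupL σ ℓ = some (.todo (t, e2))) :
      StepI (.eval (.var x, e) π σ σ') (.eval (t, e2) (.cache ℓ π) σ σ')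
  | r4done {x : Ident} {e : Env} {π : PiSt} {σ : StoreI} {σ' : StoreN} {ℓ : Loc}
      {v : VI} (he : lookupL e x = some ℓ) (hσ : lookupL σ ℓ = some (.done v)) :
      StepI (.eval (.var x, e) π σ σ') (.cont σ σ' v π)
  | r4free {x : Ident} {e : Env} {π : PiSt} {σ : StoreI} {σ' : StoreN}
      (he : lookupL e x = none) :
      StepI (.eval (.var x, e) π σ σ') (.cont σ σ' (.ne (.var x)) π)
  | r5 {σ : StoreI} {σ' : StoreN} {v : VI} {ℓ : Loc} {π : PiSt} :
      StepI (.cont σ σ' v (.cache ℓ π)) (.cont (updL σ ℓ (.done v)) σ' v π)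
  | r5' {σ : StoreI} {σ' : StoreN} {n : Nm} {ℓ' : Loc} {ϱ : RhoSt} :
      StepI (.contN σ σ' n (.cacheN ℓ' ϱ)) (.contN σ (updL σ' ℓ' (some n)) n ϱ)
  | r6 {σ : StoreI} {σ' : StoreN} {x : Ident} {t t2 : Tm Ident} {e e2 : Env}
      {ℓ' ℓ2 : Loc} {π : PiSt} (h : lookupL σ ℓ2 = none) :
      StepI (.cont σ σ' (.abs x t e ℓ') (.arg (t2, e2) π))
            (.eval (t, (x, ℓ2) :: e) π ((ℓ2, .todo (t2, e2)) :: σ) σ')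
  | r7 {σ : StoreI} {σ' : StoreN} {x x' : Ident} {t : Tm Ident} {e : Env}
      {ℓ' ℓ2 : Loc} {ϱ : RhoSt}
      (hℓ' : lookupL σ' ℓ' = some none) (hℓ2 : lookupL σ ℓ2 = none) :
      StepI (.cont σ σ' (.abs x t e ℓ') (.coe ϱ))
            (.eval (t, (x, ℓ2) :: e) (.coe (.lamF x' (.cacheN ℓ' ϱ)))
                   ((ℓ2, .done (.ne (.var x'))) :: σ) σ')
  | r8 {σ : StoreI} {σ' : StoreN} {x : Ident} {t : Tm Ident} {e : Env}
      {ℓ' : Loc} {ϱ : RhoSt} {n : Nm} (hℓ' : lookupL σ' ℓ' = some (some n)) :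
      StepI (.cont σ σ' (.abs x t e ℓ') (.coe ϱ)) (.contN σ σ' n ϱ)
  | r9 {σ : StoreI} {σ' : StoreN} {a : Ne} {t2 : Tm Ident} {e2 : Env} {π : PiSt} :
      StepI (.cont σ σ' (.ne a) (.arg (t2, e2) π))
            (.eval (t2, e2) (.coe (.appL a π)) σ σ')
  | r9a {σ : StoreI} {σ' : StoreN} {a : Ne} {ϱ : RhoSt} :
      StepI (.cont σ σ' (.ne a) (.coe ϱ)) (.contN σ σ' (.coe a) ϱ)
  | r10 {σ : StoreI} {σ' : StoreN} {n : Nm} {a : Ne} {π : PiSt} :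
      StepI (.contN σ σ' n (.appL a π)) (.cont σ σ' (.ne (.app a n)) π)
  | r11 {σ : StoreI} {σ' : StoreN} {n : Nm} {x : Ident} {ϱ : RhoSt} :
      StepI (.contN σ σ' n (.lamF x ϱ)) (.contN σ σ' (.lam x n) ϱ)

/-- Reachability for RKNLi. -/
inductive ReachI (k0 : ConfI) : ConfI → Prop
  | refl : ReachI k0 k0
  | step {k k' : ConfI} : ReachI k0 k → StepI k k' → ReachI k0 k'

/- Occurrence of closures (and therefore of terms of the syntactic category of
Terms) in RKNLi configurations. -/
mutual
  inductive InPi (c : Closure) : PiSt → Prop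
    | cacheI {ℓ : Loc} {π : PiSt} : InPi c π → InPi c (.cache ℓ π)
    | argHere {π : PiSt} : InPi c (.arg c π)
    | argThere {c' : Closure} {π : PiSt} : InPi c π → InPi c (.arg c' π)
    | coeI {ϱ : RhoSt} : InRho c ϱ → InPi c (.coe ϱ)
  inductive InRho (c : Closure) : RhoSt → Prop
    | cacheN {ℓ : Loc} {ϱ : RhoSt} : InRho c ϱ → InRho c (.cacheN ℓ ϱ)
    | lamF {x : Ident} {ϱ : RhoSt} : InRho c ϱ → InRho c (.lamF x ϱ)
    | appL {a : Ne} {π : PiSt} : InPi c π → InRho c (.appL a π)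
end

/-- A closure occurring in an RKNLi value. -/
def InVI (c : Closure) : VI → Prop
  | .ne _ => False
  | .abs x t e _ => c = (.lam x t, e)

/-- A closure occurring in the argument store. -/
def InStoreI (c : Closure) (σ : StoreI) : Prop :=
  ∃ p ∈ σ, p.2 = StorI.todo c ∨ ∃ v : VI, p.2 = StorI.done v ∧ InVI c v

/-- A closure occurring in an RKNLi configuration. -/
def ClosInI (c : Closure) : ConfI → Prop
  | .eval c0 π σ _ => c = c0 ∨ InPi c π ∨ InStoreI c σ
  | .cont σ _ v π => InVI c v ∨ InPi c π ∨ InStoreI c σ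
  | .contN σ _ _ ϱ => InRho c ϱ ∨ InStoreI c σ

/- Occurrence of closures in RKNL configurations. -/

def InVal (c : Closure) : Value → Prop
  | .tm _ => False
  | .abs x t e _ => c = (.lam x t, e)

def InStorable (c : Closure) : Storable → Prop
  | .todo c' => c = c'
  | .pend x t e => c = (.lam x t, e)
  | .done v => InVal c v

def InStore (c : Closure) (σ : Store) : Prop := ∃ p ∈ σ, InStorable c p.2

def InFrame (c : Closure) : Frame → Prop
  | .arg c' => c = c'
  | _ => False

/-- A closure occurring in an RKNL configuration. -/
def ClosIn (c : Closure) : Conf → Prop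
  | .eval c0 s σ => c = c0 ∨ (∃ f ∈ s, InFrame c f) ∨ InStore c σ
  | .cont σ v s => InVal c v ∨ (∃ f ∈ s, InFrame c f) ∨ InStore c σ

/-- Subterm relation. -/
inductive Subtm : Tm Ident → Tm Ident → Prop
  | refl (t : Tm Ident) : Subtm t t
  | appL {s a b : Tm Ident} : Subtm s a → Subtm s (.app a b)
  | appR {s a b : Tm Ident} : Subtm s b → Subtm s (.app a b)
  | lam {s t : Tm Ident} {x : Ident} : Subtm s t → Subtm s (.lam x t)

lemma Subtm.trans {a b c : Tm Ident} (h1 : Subtm a b) (h2 : Subtm b c) : Subtm a c := by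
  induction h2 with
  | refl => exact h1
  | appL _ ih => exact .appL ih
  | appR _ ih => exact .appR ih
  | lam _ ih => exact .lam ih

lemma lookupL_mem {β : Type} {l : List (ℕ × β)} {x : ℕ} {b : β}
    (h : lookupL l x = some b) : (x, b) ∈ l := by
  induction l with
  | nil => simp [lookupL] at h
  | cons p l ih =>
    obtain ⟨a, b'⟩ := p
    by_cases hx : x = a
    · simp [lookupL, hx] at h
      subst hx; subst h; exact List.mem_cons_self
    · simp [lookupL, hx] at h
      exact List.mem_cons_of_mem _ (ih h)

lemma mem_updL {β : Type} {l : List (ℕ × β)} {x : ℕ} {b : β} {p : ℕ × β}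
    (h : p ∈ updL l x b) : p.2 = b ∨ p ∈ l := by
  unfold updL at h
  rcases List.mem_map.1 h with ⟨q, hq, hpq⟩
  by_cases hqx : q.1 = x
  · simp [hqx] at hpq; left; rw [← hpq]
  · simp [hqx] at hpq; right; rw [← hpq]; exact hq

lemma inStoreI_updL {c : Closure} {σ : StoreI} {ℓ : Loc} {v : VI}
    (h : InStoreI c (updL σ ℓ (.done v))) : InStoreI c σ ∨ InVI c v := by
  obtain ⟨p, hp, hc⟩ := h
  rcases mem_updL hp with h2 | h2
  · rcases hc with hc | ⟨w, hw, hwv⟩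
    · rw [h2] at hc; cases hc
    · rw [h2] at hw; injection hw with hw; right; rwa [hw]
  · left; exact ⟨p, h2, hc⟩

lemma inStore_updL {c : Closure} {σ : Store} {ℓ : Loc} {v : Value}
    (h : InStore c (updL σ ℓ (.done v))) : InStore c σ ∨ InVal c v := by
  obtain ⟨p, hp, hc⟩ := h
  rcases mem_updL hp with h2 | h2
  · right; rw [h2] at hc; exact hc
  · left; exact ⟨p, h2, hc⟩

lemma inStoreI_cons {c : Closure} {σ : StoreI} {q : Loc × StorI}
    (h : InStoreI c (q :: σ)) :
    (q.2 = StorI.todo c ∨ ∃ v : VI, q.2 = StorI.done v ∧ InVI c v) ∨ InStoreI c σ := by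
  obtain ⟨p, hp, hc⟩ := h
  rcases List.mem_cons.1 hp with rfl | hp
  · exact Or.inl hc
  · exact Or.inr ⟨p, hp, hc⟩

lemma inStore_cons {c : Closure} {σ : Store} {q : Loc × Storable}
    (h : InStore c (q :: σ)) : InStorable c q.2 ∨ InStore c σ := by
  obtain ⟨p, hp, hc⟩ := h
  rcases List.mem_cons.1 hp with rfl | hp
  · exact Or.inl hc
  · exact Or.inr ⟨p, hp, hc⟩

/-- Preservation of the subterm invariant along one RKNLi step. -/
lemma stepI_pres {t0 : Tm Ident} {k k' : ConfI} (hs : StepI k k')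
    (hk : ∀ t e, ClosInI (t, e) k → Subtm t t0) :
    ∀ t e, ClosInI (t, e) k' → Subtm t t0 := by
  intro t e hc
  cases hs with
  | @r1 t1 t2 e0 π σ σ' =>
    rcases hc with h | h | h
    · injection h with h1 h2; subst h1; subst h2
      exact (Subtm.appL (.refl _)).trans (hk _ _ (Or.inl rfl))
    · cases h with
      | argHere => exact (Subtm.appR (.refl _)).trans (hk _ _ (Or.inl rfl))
      | argThere h => exact hk t e (Or.inr (Or.inl h))
    · exact hk t e (Or.inr (Or.inr h))
  | @r2 x t' e0 π σ σ' ℓ' hℓ =>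
    rcases hc with h | h | h
    · have h' : (t, e) = (Tm.lam x t', e0) := h
      injection h' with h1 h2; subst h1; subst h2
      exact hk _ _ (Or.inl rfl)
    · exact hk t e (Or.inr (Or.inl h))
    · exact hk t e (Or.inr (Or.inr h))
  | @r3 x e1 e2 π σ σ' ℓ t' he hσ =>
    rcases hc with h | h | h
    · injection h with h1 h2; subst h1; subst h2
      exact hk t e (Or.inr (Or.inr ⟨(ℓ, .todo (t, e)), lookupL_mem hσ, Or.inl rfl⟩))
    · cases h with
      | cacheI h => exact hk t e (Or.inr (Or.inl h))
    · exact hk t e (Or.inr (Or.inr h))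
  | @r4done x e0 π σ σ' ℓ v he hσ =>
    rcases hc with h | h | h
    · exact hk t e (Or.inr (Or.inr ⟨(ℓ, .done v), lookupL_mem hσ, Or.inr ⟨v, rfl, h⟩⟩))
    · exact hk t e (Or.inr (Or.inl h))
    · exact hk t e (Or.inr (Or.inr h))
  | @r4free x e0 π σ σ' he =>
    rcases hc with h | h | h
    · cases h
    · exact hk t e (Or.inr (Or.inl h))
    · exact hk t e (Or.inr (Or.inr h))
  | @r5 σ σ' v ℓ π =>
    rcases hc with h | h | h
    · exact hk t e (Or.inl h)
    · exact hk t e (Or.inr (Or.inl (InPi.cacheI h)))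
    · rcases inStoreI_updL h with h | h
      · exact hk t e (Or.inr (Or.inr h))
      · exact hk t e (Or.inl h)
  | @r5' σ σ' n ℓ' ϱ =>
    rcases hc with h | h
    · exact hk t e (Or.inl (InRho.cacheN h))
    · exact hk t e (Or.inr h)
  | @r6 σ σ' x t' t2 e1 e2 ℓ' ℓ2 π hℓ =>
    rcases hc with h | h | h
    · injection h with h1 h2; subst h1; subst h2
      exact (Subtm.lam (.refl _)).trans (hk _ _ (Or.inl rfl))
    · exact hk t e (Or.inr (Or.inl (InPi.argThere h)))
    · rcases inStoreI_cons h with h | h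
      · rcases h with h | ⟨w, hw, hwv⟩
        · have h' : StorI.todo (t2, e2) = StorI.todo (t, e) := h
          injection h' with h''
          injection h'' with h1 h2; subst h1; subst h2
          exact hk _ _ (Or.inr (Or.inl InPi.argHere))
        · cases hw
      · exact hk t e (Or.inr (Or.inr h))
  | @r7 σ σ' x x' t' e0 ℓ' ℓ2 ϱ hℓ' hℓ2 =>
    rcases hc with h | h | h
    · injection h with h1 h2; subst h1; subst h2
      exact (Subtm.lam (.refl _)).trans (hk _ _ (Or.inl rfl))
    · cases h with
      | coeI h =>
        cases h with
        | lamF h =>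
          cases h with
          | cacheN h => exact hk t e (Or.inr (Or.inl (InPi.coeI h)))
    · rcases inStoreI_cons h with h | h
      · rcases h with h | ⟨w, hw, hwv⟩
        · cases h
        · injection hw with hw; subst hw; cases hwv
      · exact hk t e (Or.inr (Or.inr h))
  | @r8 σ σ' x t' e0 ℓ' ϱ n hℓ' =>
    rcases hc with h | h
    · exact hk t e (Or.inr (Or.inl (InPi.coeI h)))
    · exact hk t e (Or.inr (Or.inr h))
  | @r9 σ σ' a t2 e2 π =>
    rcases hc with h | h | h
    · injection h with h1 h2; subst h1; subst h2
      exact hk _ _ (Or.inr (Or.inl InPi.argHere))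
    · cases h with
      | coeI h =>
        cases h with
        | appL h => exact hk t e (Or.inr (Or.inl (InPi.argThere h)))
    · exact hk t e (Or.inr (Or.inr h))
  | @r9a σ σ' a ϱ =>
    rcases hc with h | h
    · exact hk t e (Or.inr (Or.inl (InPi.coeI h)))
    · exact hk t e (Or.inr (Or.inr h))
  | @r10 σ σ' n a π =>
    rcases hc with h | h | h
    · cases h
    · exact hk t e (Or.inl (InRho.appL h))
    · exact hk t e (Or.inr h)
  | @r11 σ σ' n x ϱ =>
    rcases hc with h | h
    · exact hk t e (Or.inl (InRho.lamF h))
    · exact hk t e (Or.inr h)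

/-- Preservation of the subterm invariant along one RKNL step. -/
lemma step_pres {t0 : Tm Ident} {r : ℕ} {k k' : Conf} (hs : Step r k k')
    (hk : ∀ t e, ClosIn (t, e) k → Subtm t t0) :
    ∀ t e, ClosIn (t, e) k' → Subtm t t0 := by
  intro t e hc
  cases hs with
  | @r1 t1 t2 e0 s σ =>
    rcases hc with h | ⟨f, hf, hif⟩ | h
    · injection h with h1 h2; subst h1; subst h2
      exact (Subtm.appL (.refl _)).trans (hk _ _ (Or.inl rfl))
    · rcases List.mem_cons.1 hf with rfl | hf
      · have h' : (t, e) = (t2, e0) := hif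
        injection h' with h1 h2; subst h1; subst h2
        exact (Subtm.appR (.refl _)).trans (hk _ _ (Or.inl rfl))
      · exact hk t e (Or.inr (Or.inl ⟨f, hf, hif⟩))
    · exact hk t e (Or.inr (Or.inr h))
  | @r2 x t' e0 s σ ℓ hℓ =>
    rcases hc with h | h | h
    · have h' : (t, e) = (Tm.lam x t', e0) := h
      injection h' with h1 h2; subst h1; subst h2
      exact hk _ _ (Or.inl rfl)
    · exact hk t e (Or.inr (Or.inl h))
    · rcases inStore_cons h with h | h
      · exact hk t e (Or.inl h)
      · exact hk t e (Or.inr (Or.inr h))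
  | @r3 x e1 e2 s σ ℓ t' he hσ =>
    rcases hc with h | ⟨f, hf, hif⟩ | h
    · injection h with h1 h2; subst h1; subst h2
      exact hk t e (Or.inr (Or.inr ⟨(ℓ, .todo (t, e)), lookupL_mem hσ, rfl⟩))
    · rcases List.mem_cons.1 hf with rfl | hf
      · cases hif
      · exact hk t e (Or.inr (Or.inl ⟨f, hf, hif⟩))
    · exact hk t e (Or.inr (Or.inr h))
  | @r4done x e0 s σ ℓ v he hσ =>
    rcases hc with h | h | h
    · exact hk t e (Or.inr (Or.inr ⟨(ℓ, .done v), lookupL_mem hσ, h⟩))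
    · exact hk t e (Or.inr (Or.inl h))
    · exact hk t e (Or.inr (Or.inr h))
  | @r4free x e0 s σ he =>
    rcases hc with h | h | h
    · cases h
    · exact hk t e (Or.inr (Or.inl h))
    · exact hk t e (Or.inr (Or.inr h))
  | @r5 σ v ℓ s =>
    rcases hc with h | ⟨f, hf, hif⟩ | h
    · exact hk t e (Or.inl h)
    · exact hk t e (Or.inr (Or.inl ⟨f, List.mem_cons_of_mem _ hf, hif⟩))
    · rcases inStore_updL h with h | h
      · exact hk t e (Or.inr (Or.inr h))
      · exact hk t e (Or.inl h)
  | @r6 σ x t' t2 e1 e2 ℓ ℓ2 s hℓ =>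
    rcases hc with h | ⟨f, hf, hif⟩ | h
    · injection h with h1 h2; subst h1; subst h2
      exact (Subtm.lam (.refl _)).trans (hk _ _ (Or.inl rfl))
    · exact hk t e (Or.inr (Or.inl ⟨f, List.mem_cons_of_mem _ hf, hif⟩))
    · rcases inStore_cons h with h | h
      · exact hk t e (Or.inr (Or.inl ⟨.arg (t2, e2), List.mem_cons_self, h⟩))
      · exact hk t e (Or.inr (Or.inr h))
  | @r7 σ x x' x0 t' t1 e0 e1 ℓ ℓ2 s hσ hs1 hs2 hℓ2 hx' =>
    rcases hc with h | ⟨f, hf, hif⟩ | h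
    · injection h with h1 h2; subst h1; subst h2
      exact (Subtm.lam (.refl _)).trans (hk _ _ (Or.inl rfl))
    · rcases List.mem_cons.1 hf with rfl | hf
      · cases hif
      · rcases List.mem_cons.1 hf with rfl | hf
        · cases hif
        · exact hk t e (Or.inr (Or.inl ⟨f, hf, hif⟩))
    · rcases inStore_cons h with h | h
      · cases h
      · exact hk t e (Or.inr (Or.inr h))
  | @r8 σ x t' e0 ℓ s v hσ hs1 hs2 =>
    rcases hc with h | h | h
    · exact hk t e (Or.inr (Or.inr ⟨(ℓ, .done v), lookupL_mem hσ, h⟩))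
    · exact hk t e (Or.inr (Or.inl h))
    · exact hk t e (Or.inr (Or.inr h))
  | @r9 σ t1 t2 e2 s =>
    rcases hc with h | ⟨f, hf, hif⟩ | h
    · injection h with h1 h2; subst h1; subst h2
      exact hk _ _ (Or.inr (Or.inl ⟨.arg (t, e), List.mem_cons_self, rfl⟩))
    · rcases List.mem_cons.1 hf with rfl | hf
      · cases hif
      · exact hk t e (Or.inr (Or.inl ⟨f, List.mem_cons_of_mem _ hf, hif⟩))
    · exact hk t e (Or.inr (Or.inr h))
  | @r10 σ t1 t2 s =>
    rcases hc with h | ⟨f, hf, hif⟩ | h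
    · cases h
    · exact hk t e (Or.inr (Or.inl ⟨f, List.mem_cons_of_mem _ hf, hif⟩))
    · exact hk t e (Or.inr (Or.inr h))
  | @r11 σ t1 x s =>
    rcases hc with h | ⟨f, hf, hif⟩ | h
    · cases h
    · exact hk t e (Or.inr (Or.inl ⟨f, List.mem_cons_of_mem _ hf, hif⟩))
    · exact hk t e (Or.inr (Or.inr h))

/-- Subterm property: every term of the syntactic category of Terms (i.e. the
term of any closure) occurring in a reachable configuration of the ghost
machine RKNLi is a subterm of the source term; consequently, every term
occurring in a closure in a reachable RKNL configuration is a subterm of the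
source term. -/
theorem subterm_property :
    (∀ (t0 : Tm Ident) (k : ConfI) (t : Tm Ident) (e : Env),
        ReachI (ConfI.init t0) k → ClosInI (t, e) k → Subtm t t0) ∧
    (∀ (t0 : Tm Ident) (k : Conf) (t : Tm Ident) (e : Env),
        Reach (Conf.init t0) k → ClosIn (t, e) k → Subtm t t0) := by
  constructor
  · intro t0 k t e hr
    induction hr generalizing t e with
    | refl =>
      intro hc
      rcases hc with h | h | h
      · injection h with h1 h2; subst h1; exact .refl _
      · cases h with
        | coeI h => cases h
      · obtain ⟨p, hp, _⟩ := h; cases hp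
    | @step k k' hr hs ih =>
      exact fun hc => stepI_pres hs ih t e hc
  · intro t0 k t e hr
    induction hr generalizing t e with
    | refl =>
      intro hc
      rcases hc with h | ⟨f, hf, _⟩ | h
      · injection h with h1 h2; subst h1; exact .refl _
      · cases hf
      · obtain ⟨p, hp, _⟩ := h; cases hp
    | @step k k' r hr hs ih =>
      exact fun hc => step_pres hs ih t e hc

end RKNL
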